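/- Let X be a symmetric 0-1 matrix of size n = q²+q+1 with N² = qI + J and row sums q+1 (a polarity graph of PG(2,q) with a absolute/looped vertices, a = trace of N). Then any independent set S in the corresponding graph satisfies |S| ≤ (sqrt(q) + sqrt(q + 4a(q+sqrt(q)+1)/(q²+q+1))) / (2(q+sqrt(q)+1)/(q²+q+1)). -/

import Mathlib

open Matrix Finset

set_option maxHeartbeats 1000000

/-- Bound for general polarity graphs of `PG(2,q)`: if `N` is a symmetric 0-1 matrix of
size `n = q²+q+1` with `N² = qI + J`, row sums `q+1` and `a = tr(N)` absolute (looped)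
vertices, then any independent set satisfies the stated bound. -/
theorem stmt15 (q : ℕ) (hq : 2 ≤ q) (n : ℕ) (hn : n = q ^ 2 + q + 1)
    (N : Matrix (Fin n) (Fin n) ℝ) (hsym : N.IsSymm)
    (h01 : ∀ i j, N i j = 0 ∨ N i j = 1)
    (hN2 : N * N = (q : ℝ) • (1 : Matrix (Fin n) (Fin n) ℝ)
      + Matrix.of (fun _ _ => (1 : ℝ)))
    (hrow : ∀ i, ∑ j, N i j = (q : ℝ) + 1)
    (a : ℝ) (ha : a = Matrix.trace N)
    (S : Finset (Fin n)) (hind : ∀ i ∈ S, ∀ j ∈ S, i ≠ j → N i j = 0) :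
    (S.card : ℝ) ≤
      (Real.sqrt q + Real.sqrt ((q : ℝ) + 4 * a
          * ((q : ℝ) + Real.sqrt q + 1) / ((q : ℝ) ^ 2 + q + 1)))
        / (2 * ((q : ℝ) + Real.sqrt q + 1) / ((q : ℝ) ^ 2 + q + 1)) := by
  have hqR : (2:ℝ) ≤ (q:ℝ) := by exact_mod_cast hq
  have hq0 : (0:ℝ) < (q:ℝ) := by linarith
  set r : ℝ := Real.sqrt q with hr
  have hr2 : r ^ 2 = (q:ℝ) := Real.sq_sqrt hq0.le
  have hrpos : 0 < r := Real.sqrt_pos.mpr hq0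
  have hnR : ((n:ℝ)) = (q:ℝ)^2 + (q:ℝ) + 1 := by rw [hn]; push_cast; ring
  have hn0 : (0:ℝ) < (n:ℝ) := by rw [hnR]; positivity
  set c : ℝ := ((q:ℝ) + r + 1) / (n:ℝ) with hc
  have hcpos : 0 < c := by
    apply div_pos _ hn0; linarith
  have hcn : c * (n:ℝ) = (q:ℝ) + r + 1 := by
    rw [hc, div_mul_cancel₀ _ hn0.ne']
  have hkey : c * ((q:ℝ) - r + 1) = 1 := by
    rw [hc, div_mul_eq_mul_div, div_eq_one_iff_eq hn0.ne', hnR]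
    nlinarith [hr2]
  obtain ⟨J, hJ⟩ : ∃ J' : Matrix (Fin n) (Fin n) ℝ, J' = Matrix.of (fun _ _ => (1:ℝ)) :=
    ⟨_, rfl⟩
  have hN2' : N * N = (q:ℝ) • (1 : Matrix (Fin n) (Fin n) ℝ) + J := by rw [hN2, hJ]
  have hNJ : N * J = ((q:ℝ)+1) • J := by
    ext i j
    simp [Matrix.mul_apply, hJ, hrow i]
  have hJN : J * N = ((q:ℝ)+1) • J := by
    ext i j
    simp only [Matrix.mul_apply, hJ, Matrix.of_apply, one_mul, Matrix.smul_apply,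
      smul_eq_mul, mul_one]
    calc ∑ k, N k j = ∑ k, N j k := Finset.sum_congr rfl fun k _ => hsym.apply j k
      _ = (q:ℝ) + 1 := hrow j
  have hJJ : J * J = (n:ℝ) • J := by
    ext i j
    simp [Matrix.mul_apply, hJ]
  obtain ⟨A, hA⟩ : ∃ A' : Matrix (Fin n) (Fin n) ℝ,
      A' = N + r • (1 : Matrix (Fin n) (Fin n) ℝ) - c • J := ⟨_, rfl⟩
  have hAsymm : Aᵀ = A := by
    have hJs : Jᵀ = J := by ext i j; simp [hJ]
    simp [hA, Matrix.transpose_sub, Matrix.transpose_add, Matrix.transpose_smul,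
      hsym.eq, hJs]
  have hA2 : A * A = (2*r) • A := by
    rw [hA]
    simp only [Matrix.add_mul, Matrix.sub_mul, Matrix.mul_add, Matrix.mul_sub,
      Matrix.smul_mul, Matrix.mul_smul, Matrix.one_mul, Matrix.mul_one,
      hN2', hNJ, hJN, hJJ, smul_add, smul_sub, smul_smul]
    have hJcoeff : (1:ℝ) - 2*c*((q:ℝ)+1) + c*(c*(n:ℝ)) = 0 := by
      rw [hcn]; nlinarith [hkey]
    match_scalars
    all_goals linarith [hr2, hJcoeff]
  -- quadratic form with indicator vector of S
  obtain ⟨x, hx⟩ : ∃ x' : Fin n → ℝ, x' = fun i => if i ∈ S then 1 else 0 := ⟨_, rfl⟩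
  have hxsum : ∀ (y : Fin n → ℝ), (∑ i, x i * y i) = ∑ i ∈ S, y i := by
    intro y
    simp only [hx, ite_mul, one_mul, zero_mul]
    rw [Finset.sum_ite_mem, Finset.univ_inter]
  have hqf : ∀ (M : Matrix (Fin n) (Fin n) ℝ),
      x ⬝ᵥ (M *ᵥ x) = ∑ i ∈ S, ∑ j ∈ S, M i j := by
    intro M
    simp only [dotProduct, Matrix.mulVec, dotProduct]
    rw [hxsum]
    refine Finset.sum_congr rfl fun i _ => ?_
    rw [← hxsum (fun j => M i j)]
    exact Finset.sum_congr rfl fun j _ => by ring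
  set s : ℝ := (S.card : ℝ) with hs
  have hs0 : 0 ≤ s := by positivity
  have hqfN : x ⬝ᵥ (N *ᵥ x) ≤ a := by
    rw [hqf]
    have hdiag : ∀ i ∈ S, (∑ j ∈ S, N i j) = N i i := by
      intro i hi
      exact Finset.sum_eq_single_of_mem i hi fun j hj hji => hind i hi j hj (Ne.symm hji)
    rw [Finset.sum_congr rfl hdiag, ha, Matrix.trace]
    refine Finset.sum_le_sum_of_subset_of_nonneg (Finset.subset_univ S) ?_
    intro i _ _
    rcases h01 i i with h | h <;> simp [Matrix.diag, h]
  have hqf1 : x ⬝ᵥ ((1 : Matrix (Fin n) (Fin n) ℝ) *ᵥ x) = s := by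
    rw [Matrix.one_mulVec, dotProduct, hxsum, hs]
    simp only [hx]
    rw [Finset.sum_ite_mem, Finset.inter_self, Finset.sum_const, nsmul_eq_mul, mul_one]
  have hqfJ : x ⬝ᵥ (J *ᵥ x) = s ^ 2 := by
    rw [hqf]
    simp only [hJ, Matrix.of_apply, Finset.sum_const, nsmul_eq_mul, mul_one, hs]
    ring
  have hqfA : x ⬝ᵥ (A *ᵥ x) = x ⬝ᵥ (N *ᵥ x) + r * s - c * s ^ 2 := by
    rw [hA, Matrix.sub_mulVec, Matrix.add_mulVec, Matrix.smul_mulVec,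
      Matrix.smul_mulVec, dotProduct_sub, dotProduct_add,
      dotProduct_smul, dotProduct_smul, hqf1, hqfJ]
    simp only [smul_eq_mul]
    try ring
  have hAnonneg : 0 ≤ x ⬝ᵥ (A *ᵥ x) := by
    have h1 : (2*r) * (x ⬝ᵥ (A *ᵥ x)) = (A *ᵥ x) ⬝ᵥ (A *ᵥ x) := by
      have h2 : A *ᵥ x = x ᵥ* A := by
        rw [← hAsymm, Matrix.mulVec_transpose, hAsymm]
      calc (2*r) * (x ⬝ᵥ (A *ᵥ x)) = x ⬝ᵥ ((2*r) • (A *ᵥ x)) := by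
            rw [dotProduct_smul]; simp
        _ = x ⬝ᵥ (((2*r) • A) *ᵥ x) := by rw [Matrix.smul_mulVec]
        _ = x ⬝ᵥ ((A * A) *ᵥ x) := by rw [hA2]
        _ = x ⬝ᵥ (A *ᵥ (A *ᵥ x)) := by rw [← Matrix.mulVec_mulVec]
        _ = (x ᵥ* A) ⬝ᵥ (A *ᵥ x) := by rw [Matrix.dotProduct_mulVec]
        _ = (A *ᵥ x) ⬝ᵥ (A *ᵥ x) := by rw [h2]
    have h3 : 0 ≤ (A *ᵥ x) ⬝ᵥ (A *ᵥ x) :=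
      Finset.sum_nonneg fun i _ => mul_self_nonneg _
    nlinarith [h1, h3]
  have hquad : c * s ^ 2 - r * s ≤ a := by linarith [hqfA, hAnonneg, hqfN]
  have ha0 : 0 ≤ a := by
    rw [ha, Matrix.trace]
    refine Finset.sum_nonneg fun i _ => ?_
    rcases h01 i i with h | h <;> simp [Matrix.diag, h]
  -- rewrite the goal in terms of c
  have hD0 : 0 ≤ (q:ℝ) + 4 * a * c := by positivity
  have hsD : Real.sqrt ((q:ℝ) + 4 * a * c) ^ 2 = (q:ℝ) + 4 * a * c :=
    Real.sq_sqrt hD0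
  have hsDnn : 0 ≤ Real.sqrt ((q:ℝ) + 4 * a * c) := Real.sqrt_nonneg _
  have hgoal : (Real.sqrt q + Real.sqrt ((q : ℝ) + 4 * a
          * ((q : ℝ) + Real.sqrt q + 1) / ((q : ℝ) ^ 2 + q + 1)))
        / (2 * ((q : ℝ) + Real.sqrt q + 1) / ((q : ℝ) ^ 2 + q + 1))
      = (r + Real.sqrt ((q:ℝ) + 4 * a * c)) / (2 * c) := by
    rw [← hr, ← hnR]
    have e1 : (q:ℝ) + 4 * a * ((q:ℝ) + r + 1) / (n:ℝ) = (q:ℝ) + 4 * a * c := by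
      rw [hc]; ring
    have e2 : 2 * ((q:ℝ) + r + 1) / (n:ℝ) = 2 * c := by
      rw [hc]; ring
    rw [e1, e2]
  rw [hgoal, le_div_iff₀ (by positivity : (0:ℝ) < 2 * c)]
  nlinarith [hquad, hsD, hsDnn, hr2, hcpos, hs0,
    sq_nonneg (Real.sqrt ((q:ℝ) + 4 * a * c) - (2 * c * s - r)),
    mul_nonneg hcpos.le hs0]
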